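/- arXiv:1601.07299 — 2 statements merged into one kernel-verified Lean document; each statement's English description precedes it below -/
import Mathlib

section
/- Every finite rank algebraic vector bundle on the projective line over an algebraically closed field of characteristic zero is isomorphic to a direct sum of line bundles O(a_1) ⊕ ... ⊕ O(a_r). -/
set_option linter.unnecessarySeqFocus false

section BirkhoffHelpers

open Polynomial Matrix Finset LaurentPolynomial

variable {K : Type*} [Field K]

/-- The reversal of `p` relative to degree bound `d`. -/
noncomputable def birkhoffRev (d : ℕ) (p : Polynomial K) : Polynomial K :=
  ∑ k ∈ Finset.range (d + 1), Polynomial.C (p.coeff k) * Polynomial.X ^ (d - k)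

lemma birkhoffRev_key (d : ℕ) (p : Polynomial K) (hp : p.natDegree ≤ d) :
    LaurentPolynomial.T (d : ℤ) *
      Polynomial.aeval (LaurentPolynomial.T (-1 : ℤ)) (birkhoffRev d p)
      = Polynomial.toLaurent p := by
  rw [birkhoffRev, map_sum, Finset.mul_sum]
  conv_rhs => rw [p.as_sum_range' (d+1) (Nat.lt_succ_of_le hp), map_sum]
  refine Finset.sum_congr rfl fun x hx => ?_
  have hxd : x ≤ d := Nat.lt_succ_iff.mp (Finset.mem_range.mp hx)
  rw [Polynomial.toLaurent_C_mul_T, _root_.map_mul, Polynomial.aeval_C, map_pow,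
    Polynomial.aeval_X, LaurentPolynomial.T_pow, LaurentPolynomial.algebraMap_apply,
    Algebra.algebraMap_self, RingHom.id_apply, mul_left_comm, ← LaurentPolynomial.T_add]
  congr 2
  omega

lemma birkhoffRev_eval_zero (d : ℕ) (p : Polynomial K) :
    Polynomial.eval 0 (birkhoffRev d p) = p.coeff d := by
  rw [birkhoffRev, Polynomial.eval_finset_sum]
  rw [Finset.sum_eq_single d]
  · simp
  · intro k hk hkd
    have : d - k ≠ 0 := by
      have := Finset.mem_range.mp hk; omega
    simp [zero_pow this]
  · intro h
    exact absurd (Finset.self_mem_range_succ d) h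

lemma invert_aeval_T_neg_one (p : Polynomial K) :
    LaurentPolynomial.invert (Polynomial.aeval (LaurentPolynomial.T (-1 : ℤ)) p)
      = Polynomial.toLaurent p := by
  have h : (LaurentPolynomial.invert.toAlgHom.comp
      (Polynomial.aeval (T (-1 : ℤ)) : Polynomial K →ₐ[K] LaurentPolynomial K))
      = Polynomial.toLaurentAlg := by
    apply Polynomial.algHom_ext
    simp [Polynomial.toLaurentAlg_apply]
  have := DFunLike.congr_fun h p
  simpa [Polynomial.toLaurentAlg_apply] using this

lemma aeval_T_neg_one_injective :
    Function.Injective (Polynomial.aeval (LaurentPolynomial.T (-1 : ℤ)) :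
      Polynomial K → LaurentPolynomial K) := by
  intro a b hab
  apply Polynomial.toLaurent_injective
  rw [← invert_aeval_T_neg_one, ← invert_aeval_T_neg_one, hab]

lemma aeval_T_one_eq_toLaurent (p : Polynomial K) :
    Polynomial.aeval (LaurentPolynomial.T (1 : ℤ)) p = Polynomial.toLaurent p := by
  have h : (Polynomial.aeval (T (1 : ℤ)) : Polynomial K →ₐ[K] LaurentPolynomial K)
      = Polynomial.toLaurentAlg := by
    apply Polynomial.algHom_ext
    simp [Polynomial.toLaurentAlg_apply]
  rw [h, Polynomial.toLaurentAlg_apply]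

lemma birkhoff_unit_C (q : Polynomial K)
    (h : IsUnit (Polynomial.aeval (LaurentPolynomial.T (R := K) (-1 : ℤ)) q))
    (h0 : q.coeff 0 ≠ 0) : ∃ c : K, c ≠ 0 ∧ q = Polynomial.C c := by
  obtain ⟨b, hb⟩ := h.exists_right_inv
  obtain ⟨n, u, hu⟩ := LaurentPolynomial.exists_T_pow (LaurentPolynomial.invert (R := K) b)
  have hψu : Polynomial.aeval (LaurentPolynomial.T (R := K) (-1 : ℤ)) u
      = b * T (-(n : ℤ)) := by
    have h3 := LaurentPolynomial.involutive_invert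
      (Polynomial.aeval (LaurentPolynomial.T (R := K) (-1 : ℤ)) u)
    rw [← h3, invert_aeval_T_neg_one, hu, _root_.map_mul, LaurentPolynomial.invert_T,
      LaurentPolynomial.involutive_invert b]
  have hqu : q * u = Polynomial.X ^ n := by
    apply aeval_T_neg_one_injective (K := K)
    rw [_root_.map_mul, hψu, _root_.map_pow, Polynomial.aeval_X, LaurentPolynomial.T_pow,
      ← mul_assoc, hb, one_mul]
    congr 1
    omega
  obtain ⟨i, hin, hassoc⟩ := (dvd_prime_pow Polynomial.prime_X n).mp ⟨u, hqu.symm⟩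
  obtain ⟨w, hw⟩ := hassoc
  obtain ⟨c, hc, hCc⟩ := Polynomial.isUnit_iff.mp w.isUnit
  have hqc : q * Polynomial.C c = Polynomial.X ^ i := by rw [hCc]; exact hw
  have hi0 : i = 0 := by
    by_contra hi
    have h4 := congrArg (fun p => Polynomial.coeff p 0) hqc
    simp only [Polynomial.mul_coeff_zero, Polynomial.coeff_X_pow, Polynomial.coeff_C_zero] at h4
    rw [if_neg (fun h => hi h.symm)] at h4
    exact (mul_ne_zero h0 (isUnit_iff_ne_zero.mp hc)) h4
  have hq_unit : IsUnit q := by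
    rw [hi0, pow_zero] at hqc
    exact IsUnit.of_mul_eq_one _ hqc
  obtain ⟨cq, _, hCq⟩ := Polynomial.isUnit_iff.mp hq_unit
  refine ⟨cq, ?_, hCq.symm⟩
  rw [← hCq] at h0
  simpa using h0


open Polynomial Matrix Finset

variable {k : Type*} [Field k]

theorem birkhoff_row_reduce (r : ℕ) :
    ∀ (n : ℕ) (N : Matrix (Fin r) (Fin r) (Polynomial k)),
      (∑ i, Finset.univ.sup fun j => (N i j).natDegree) ≤ n → N.det ≠ 0 →
      ∃ (A : Matrix (Fin r) (Fin r) (Polynomial k)) (d : Fin r → ℕ),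
        IsUnit A.det ∧ (∀ i j, ((A * N) i j).degree ≤ (d i : ℕ)) ∧
        Matrix.det (Matrix.of fun i j => ((A * N) i j).coeff (d i)) ≠ 0 := by
  intro n
  induction n using Nat.strong_induction_on with
  | _ n ih =>
  intro N hm hdet
  classical
  set d : Fin r → ℕ := fun i => Finset.univ.sup fun j => (N i j).natDegree with hd
  set Λ : Matrix (Fin r) (Fin r) k := Matrix.of fun i j => (N i j).coeff (d i) with hΛ
  by_cases hΛdet : Λ.det ≠ 0
  · refine ⟨1, d, by simp, ?_, ?_⟩
    · intro i j
      rw [Matrix.one_mul]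
      exact le_trans (Polynomial.degree_le_natDegree)
        (Nat.cast_le.mpr (Finset.le_sup (f := fun j => (N i j).natDegree) (Finset.mem_univ j)))
    · rw [Matrix.one_mul]
      exact hΛdet
  · push_neg at hΛdet
    obtain ⟨μ, hμ0, hμ⟩ := Matrix.exists_vecMul_eq_zero_iff.mpr hΛdet
    have hs : (Finset.univ.filter fun i => μ i ≠ 0).Nonempty := by
      obtain ⟨i, hi⟩ := Function.ne_iff.mp hμ0
      exact ⟨i, Finset.mem_filter.mpr ⟨Finset.mem_univ i, hi⟩⟩
    obtain ⟨i0, hi0mem, hi0max⟩ :=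
      Finset.exists_max_image (Finset.univ.filter fun i => μ i ≠ 0) d hs
    have hμi0 : μ i0 ≠ 0 := (Finset.mem_filter.mp hi0mem).2
    have hi0max' : ∀ i, μ i ≠ 0 → d i ≤ d i0 := fun i hi =>
      hi0max i (Finset.mem_filter.mpr ⟨Finset.mem_univ i, hi⟩)
    set ν : Fin r → k := fun i => (μ i0)⁻¹ * μ i with hν
    have hνi0 : ν i0 = 1 := inv_mul_cancel₀ hμi0
    have hνμ : ∀ i, ν i ≠ 0 → μ i ≠ 0 := by
      intro i hi hc
      exact hi (by simp [hν, hc])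
    have hν0 : ∀ j, ∑ i, ν i * Λ i j = 0 := by
      intro j
      have h1 : ∑ i, μ i * Λ i j = 0 := by
        have h := congrFun hμ j
        simpa [Matrix.vecMul, dotProduct] using h
      simp only [hν, mul_assoc, ← Finset.mul_sum, h1, mul_zero]
    set E : Matrix (Fin r) (Fin r) (Polynomial k) :=
      Matrix.of fun i j => if i = i0 ∧ j ≠ i0
        then Polynomial.C (ν j) * Polynomial.X ^ (d i0 - d j) else 0 with hE
    have hEE : E * E = 0 := by
      refine Matrix.ext fun i j => ?_
      rw [Matrix.mul_apply, Matrix.zero_apply]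
      refine Finset.sum_eq_zero (fun t _ => ?_)
      by_cases ht : t = i0
      · have h2 : E i t * E t j = E i t * 0 := by
          rw [hE]; simp [ht]
        rw [h2, mul_zero]
      · have h2 : E i t * E t j = 0 * E t j := by
          conv_lhs => rw [hE]
          simp [ht]
        rw [h2, zero_mul]
    set U : Matrix (Fin r) (Fin r) (Polynomial k) := 1 + E with hU
    set Uinv : Matrix (Fin r) (Fin r) (Polynomial k) := 1 - E with hUinv
    have hUUinv : U * Uinv = 1 := by
      rw [hU, hUinv, add_mul, one_mul, mul_sub, mul_one, hEE]
      abel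
    have hUinvU : Uinv * U = 1 := by
      rw [hU, hUinv, sub_mul, one_mul, mul_add, mul_one, hEE]
      abel
    have hdetU : IsUnit U.det :=
      (Matrix.isUnit_iff_isUnit_det U).mp ⟨⟨U, Uinv, hUUinv, hUinvU⟩, rfl⟩
    have hrow_ne : ∀ i, i ≠ i0 → ∀ j, (U * N) i j = N i j := by
      intro i hi j
      rw [hU, Matrix.add_mul, Matrix.one_mul, Matrix.add_apply, Matrix.mul_apply]
      rw [Finset.sum_eq_zero fun t _ => by simp [hE, hi], add_zero]
    have hUN0 : ∀ j, (U * N) i0 j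
        = ∑ t, Polynomial.C (ν t) * (N t j * Polynomial.X ^ (d i0 - d t)) := by
      intro j
      rw [hU, Matrix.add_mul, Matrix.one_mul, Matrix.add_apply, Matrix.mul_apply]
      have hsplit : ∀ (g : Fin r → Polynomial k),
          ∑ t, g t = g i0 + ∑ t, (if t = i0 then 0 else g t) := by
        intro g
        have h1 : ∑ t, (if t = i0 then g t else 0) + ∑ t, (if t = i0 then 0 else g t)
            = ∑ t, g t := by
          rw [← Finset.sum_add_distrib]
          exact Finset.sum_congr rfl fun t _ => by by_cases ht : t = i0 <;> simp [ht]
        rw [← h1, Finset.sum_ite_eq' Finset.univ i0 g, if_pos (Finset.mem_univ i0)]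
      rw [hsplit fun t => Polynomial.C (ν t) * (N t j * Polynomial.X ^ (d i0 - d t))]
      congr 1
      · simp [hνi0]
      · refine Finset.sum_congr rfl fun t _ => ?_
        by_cases ht : t = i0 <;> simp [hE, ht] <;> ring
    have hcoeff : ∀ j m, d i0 ≤ m → ((U * N) i0 j).coeff m
        = ∑ t, ν t * (N t j).coeff (m - (d i0 - d t)) := by
      intro j m hm'
      rw [hUN0, Polynomial.finset_sum_coeff]
      refine Finset.sum_congr rfl fun t _ => ?_
      rw [Polynomial.coeff_C_mul, Polynomial.coeff_mul_X_pow']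
      rw [if_pos (le_trans (Nat.sub_le _ _) hm')]
    have hNdeg : ∀ t j, (N t j).natDegree ≤ d t :=
      fun t j => Finset.le_sup (f := fun j => (N t j).natDegree) (Finset.mem_univ j)
    have hlt : ∀ j, ((U * N) i0 j).degree < (d i0 : ℕ) := by
      intro j
      rw [Polynomial.degree_lt_iff_coeff_zero]
      intro m hm'
      have hm'' : d i0 ≤ m := by exact_mod_cast hm'
      rw [hcoeff j m hm'']
      rcases eq_or_lt_of_le hm'' with he | hlt'
      · have heq : ∀ t, ν t * (N t j).coeff (m - (d i0 - d t)) = ν t * Λ t j := by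
          intro t
          by_cases hνt : ν t = 0
          · simp [hνt]
          · have hdt : d t ≤ d i0 := hi0max' t (hνμ t hνt)
            have hmt : m - (d i0 - d t) = d t := by omega
            rw [hmt, hΛ]
            rfl
        simp_rw [heq]
        exact hν0 j
      · refine Finset.sum_eq_zero fun t _ => ?_
        by_cases hνt : ν t = 0
        · simp [hνt]
        · have hdt : d t ≤ d i0 := hi0max' t (hνμ t hνt)
          have hnd : (N t j).natDegree < m - (d i0 - d t) := by
            have := hNdeg t j
            omega
          rw [Polynomial.coeff_eq_zero_of_natDegree_lt hnd, mul_zero]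
    have hdetUN : (U * N).det ≠ 0 := by
      rw [Matrix.det_mul]
      exact mul_ne_zero hdetU.ne_zero hdet
    obtain ⟨j0, hj0⟩ : ∃ j, (U * N) i0 j ≠ 0 := by
      by_contra h
      push_neg at h
      exact hdetUN (Matrix.det_eq_zero_of_row_eq_zero i0 h)
    have hd0pos : 0 < d i0 := by
      by_contra h
      push_neg at h
      have h0 : d i0 = 0 := Nat.le_zero.mp h
      have h1 := hlt j0
      rw [h0] at h1
      exact absurd (lt_of_le_of_lt (Polynomial.zero_le_degree_iff.mpr hj0)
        (by exact_mod_cast h1)) (lt_irrefl _)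
    have hsup_lt : (Finset.univ.sup fun j => ((U * N) i0 j).natDegree) < d i0 := by
      rw [Finset.sup_lt_iff (by simpa using hd0pos)]
      intro j _
      by_cases hz : (U * N) i0 j = 0
      · simpa [hz] using hd0pos
      · exact (Polynomial.natDegree_lt_iff_degree_lt hz).mpr (hlt j)
    have hmeas : (∑ i, Finset.univ.sup fun j => ((U * N) i j).natDegree)
        < ∑ i, Finset.univ.sup fun j => (N i j).natDegree := by
      refine Finset.sum_lt_sum (fun i _ => ?_) ⟨i0, Finset.mem_univ _, ?_⟩
      · rcases eq_or_ne i i0 with rfl | hi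
        · exact le_of_lt hsup_lt
        · have hr : ∀ j, (U * N) i j = N i j := hrow_ne i hi
          simp only [hr]
          exact le_rfl
      · exact hsup_lt
    obtain ⟨A', d', hu', hdeg', hcoef'⟩ :=
      ih (∑ i, Finset.univ.sup fun j => ((U * N) i j).natDegree)
        (lt_of_lt_of_le hmeas hm) (U * N) le_rfl hdetUN
    refine ⟨A' * U, d', ?_, ?_, ?_⟩
    · rw [Matrix.det_mul]
      exact hu'.mul hdetU
    · intro i j
      rw [Matrix.mul_assoc]
      exact hdeg' i j
    · simp only [Matrix.mul_assoc]
      exact hcoef'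

end BirkhoffHelpers

open Polynomial Matrix Finset LaurentPolynomial

/-- **Birkhoff–Grothendieck splitting.**  Every finite rank algebraic vector bundle on the
projective line `ℙ¹` over an algebraically closed field `K` of characteristic zero is
isomorphic to a direct sum of line bundles `O(a₁) ⊕ ⋯ ⊕ O(aᵣ)`.

A rank `r` algebraic vector bundle on `ℙ¹ = U₀ ∪ U_∞` (with `U₀ = Spec K[x]`,
`U_∞ = Spec K[x⁻¹]`, `U₀ ∩ U_∞ = Spec K[x, x⁻¹]`) is given by its transition matrix
`M ∈ GL_r(K[x, x⁻¹])` on the overlap, and the bundle splits as `⊕ O(aᵢ)` precisely when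
`M = A · diag(xᵃ¹, …, xᵃʳ) · B` with `A ∈ GL_r(K[x])` and `B ∈ GL_r(K[x⁻¹])`
(changes of trivialization on the two charts).  This is the classical Birkhoff
factorization form of the theorem. -/
theorem birkhoff_grothendieck_splitting (K : Type*) [Field K] [IsAlgClosed K] [CharZero K]
    (r : ℕ) (M : GL (Fin r) (LaurentPolynomial K)) :
    ∃ (a : Fin r → ℤ) (A B : GL (Fin r) (LaurentPolynomial K)),
      (∀ i j, (A : Matrix (Fin r) (Fin r) (LaurentPolynomial K)) i j ∈
          Algebra.adjoin K {LaurentPolynomial.T (R := K) 1}) ∧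
      (∀ i j, ((A⁻¹ : GL (Fin r) (LaurentPolynomial K)) :
          Matrix (Fin r) (Fin r) (LaurentPolynomial K)) i j ∈
          Algebra.adjoin K {LaurentPolynomial.T (R := K) 1}) ∧
      (∀ i j, (B : Matrix (Fin r) (Fin r) (LaurentPolynomial K)) i j ∈
          Algebra.adjoin K {LaurentPolynomial.T (R := K) (-1)}) ∧
      (∀ i j, ((B⁻¹ : GL (Fin r) (LaurentPolynomial K)) :
          Matrix (Fin r) (Fin r) (LaurentPolynomial K)) i j ∈
          Algebra.adjoin K {LaurentPolynomial.T (R := K) (-1)}) ∧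
      (M : Matrix (Fin r) (Fin r) (LaurentPolynomial K)) =
        (A : Matrix (Fin r) (Fin r) (LaurentPolynomial K)) *
          Matrix.diagonal (fun i => LaurentPolynomial.T (a i)) *
          (B : Matrix (Fin r) (Fin r) (LaurentPolynomial K)) := by
  classical
  have hlift : ∀ i j, ∃ (n : ℕ) (p : Polynomial K),
      Polynomial.toLaurent p
        = (M : Matrix (Fin r) (Fin r) (LaurentPolynomial K)) i j * T (n : ℤ) :=
    fun i j => LaurentPolynomial.exists_T_pow _
  choose g q hq using hlift
  set N₀ : ℕ := Finset.univ.sup (fun p : Fin r × Fin r => g p.1 p.2) with hN₀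
  set P : Matrix (Fin r) (Fin r) (Polynomial K) :=
    Matrix.of (fun i j => q i j * Polynomial.X ^ (N₀ - g i j)) with hPdef
  have hP : ∀ i j, Polynomial.toLaurent (P i j)
      = (M : Matrix (Fin r) (Fin r) (LaurentPolynomial K)) i j * T (N₀ : ℤ) := by
    intro i j
    have hg : g i j ≤ N₀ :=
      Finset.le_sup (f := fun p : Fin r × Fin r => g p.1 p.2) (Finset.mem_univ (i, j))
    show Polynomial.toLaurent (q i j * Polynomial.X ^ (N₀ - g i j)) = _
    rw [_root_.map_mul, hq i j, Polynomial.toLaurent_X_pow, mul_assoc, ← T_add]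
    congr 2
    omega
  have hMdet : IsUnit ((M : Matrix (Fin r) (Fin r) (LaurentPolynomial K)).det) :=
    (Matrix.isUnit_iff_isUnit_det _).mp M.isUnit
  have hPmap : P.map (Polynomial.toLaurent)
      = LaurentPolynomial.T (R := K) (N₀ : ℤ) • (M : Matrix (Fin r) (Fin r) (LaurentPolynomial K)) := by
    refine Matrix.ext fun i j => ?_
    rw [Matrix.map_apply, hP i j, Matrix.smul_apply, smul_eq_mul, mul_comm]
  have hdetPL : IsUnit ((P.map (Polynomial.toLaurent : Polynomial K →+* _)).det) := by
    rw [hPmap, Matrix.det_smul]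
    exact ((LaurentPolynomial.isUnit_T _).pow _).mul hMdet
  have hdetP : P.det ≠ 0 := by
    intro h
    have h2 : (Polynomial.toLaurent : Polynomial K →+* _) P.det
        = (P.map (Polynomial.toLaurent : Polynomial K →+* _)).det :=
      RingHom.map_det _ P
    rw [h, map_zero] at h2
    exact hdetPL.ne_zero h2.symm
  obtain ⟨A, d, hAdet, hdeg, hΛ⟩ := birkhoff_row_reduce r
    (∑ i, Finset.univ.sup fun j => (P i j).natDegree) P le_rfl hdetP
  set M' : Matrix (Fin r) (Fin r) (Polynomial K) := A * P with hM'
  set Q : Matrix (Fin r) (Fin r) (Polynomial K) :=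
    Matrix.of (fun i j => birkhoffRev (d i) (M' i j)) with hQ
  set ψ : Polynomial K →+* LaurentPolynomial K :=
    (Polynomial.aeval (LaurentPolynomial.T (R := K) (-1 : ℤ))).toRingHom with hψ
  have hψa : ∀ p : Polynomial K,
      ψ p = Polynomial.aeval (LaurentPolynomial.T (R := K) (-1 : ℤ)) p := fun p => rfl
  have hkey : Matrix.diagonal (fun i => T (d i : ℤ)) * Q.map ψ
      = M'.map (Polynomial.toLaurent : Polynomial K →+* _) := by
    refine Matrix.ext fun i j => ?_
    rw [Matrix.diagonal_mul, Matrix.map_apply, Matrix.map_apply]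
    exact birkhoffRev_key (d i) (M' i j)
      (Polynomial.natDegree_le_iff_degree_le.mpr (hdeg i j))
  have hMap' : M'.map (Polynomial.toLaurent : Polynomial K →+* _)
      = (A.map (Polynomial.toLaurent : Polynomial K →+* _))
        * (LaurentPolynomial.T (R := K) (N₀ : ℤ) • (M : Matrix (Fin r) (Fin r) (LaurentPolynomial K))) := by
    rw [hM', Matrix.map_mul, hPmap]
  -- determinant of Q.map ψ is a unit
  have hQψdet : IsUnit ((Q.map ψ).det) := by
    have h1 := congrArg Matrix.det hkey
    rw [Matrix.det_mul, Matrix.det_diagonal] at h1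
    have h2 : IsUnit ((M'.map (Polynomial.toLaurent : Polynomial K →+* _)).det) := by
      have h3 : (A.map (Polynomial.toLaurent : Polynomial K →+* LaurentPolynomial K)).det
          = (Polynomial.toLaurent : Polynomial K →+* LaurentPolynomial K) A.det :=
        by rw [RingHom.map_det]; rfl
      rw [hM', Matrix.map_mul, Matrix.det_mul, h3]
      exact (hAdet.map (Polynomial.toLaurent : Polynomial K →+* LaurentPolynomial K)).mul hdetPL
    rw [← h1] at h2
    exact isUnit_of_mul_isUnit_right h2
  have hcoeff0 : Q.det.coeff 0 ≠ 0 := by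
    rw [Polynomial.coeff_zero_eq_eval_zero]
    have h1 : (Polynomial.evalRingHom (0 : K)) Q.det
        = (Q.map (Polynomial.evalRingHom (0 : K))).det := RingHom.map_det _ Q
    have h2 : Q.map (Polynomial.evalRingHom (0 : K))
        = Matrix.of fun i j => ((M' i j).coeff (d i)) := by
      refine Matrix.ext fun i j => ?_
      rw [Matrix.map_apply]
      exact birkhoffRev_eval_zero (d i) (M' i j)
    show (Polynomial.evalRingHom (0 : K)) Q.det ≠ 0
    rw [h1, h2]
    exact hΛ
  obtain ⟨c, hc, hQc⟩ := birkhoff_unit_C Q.det (by rw [← hψa]; exact (RingHom.map_det ψ Q) ▸ hQψdet) hcoeff0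
  have hQdetU : IsUnit Q.det := by
    rw [hQc]
    exact Polynomial.isUnit_C.mpr (isUnit_iff_ne_zero.mpr hc)
  -- the two GL elements
  set 𝔸 : GL (Fin r) (LaurentPolynomial K) :=
    ⟨A.map (Polynomial.toLaurent : Polynomial K →+* _),
     (A⁻¹).map (Polynomial.toLaurent : Polynomial K →+* _),
     by rw [← Matrix.map_mul, Matrix.mul_nonsing_inv A hAdet,
       Matrix.map_one _ (map_zero _) (map_one _)],
     by rw [← Matrix.map_mul, Matrix.nonsing_inv_mul A hAdet,
       Matrix.map_one _ (map_zero _) (map_one _)]⟩ with h𝔸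
  set B : GL (Fin r) (LaurentPolynomial K) :=
    ⟨Q.map ψ, (Q⁻¹).map ψ,
     by rw [← Matrix.map_mul, Matrix.mul_nonsing_inv Q hQdetU,
       Matrix.map_one _ (map_zero _) (map_one _)],
     by rw [← Matrix.map_mul, Matrix.nonsing_inv_mul Q hQdetU,
       Matrix.map_one _ (map_zero _) (map_one _)]⟩ with hB
  refine ⟨fun i => (d i : ℤ) - N₀, 𝔸⁻¹, B, ?_, ?_, ?_, ?_, ?_⟩
  · intro i j
    show (A⁻¹).map (Polynomial.toLaurent : Polynomial K →+* _) i j ∈ _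
    rw [Algebra.adjoin_singleton_eq_range_aeval]
    exact ⟨(A⁻¹) i j, aeval_T_one_eq_toLaurent _⟩
  · intro i j
    rw [inv_inv]
    show A.map (Polynomial.toLaurent : Polynomial K →+* _) i j ∈ _
    rw [Algebra.adjoin_singleton_eq_range_aeval]
    exact ⟨A i j, aeval_T_one_eq_toLaurent _⟩
  · intro i j
    show Q.map ψ i j ∈ _
    rw [Algebra.adjoin_singleton_eq_range_aeval]
    exact ⟨Q i j, (hψa _).symm⟩
  · intro i j
    show (Q⁻¹).map ψ i j ∈ _
    rw [Algebra.adjoin_singleton_eq_range_aeval]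
    exact ⟨(Q⁻¹) i j, (hψa _).symm⟩
  · -- the factorization
    have hE1 : (𝔸 : Matrix (Fin r) (Fin r) (LaurentPolynomial K))
        * (LaurentPolynomial.T (R := K) (N₀ : ℤ) • (M : Matrix (Fin r) (Fin r) (LaurentPolynomial K)))
        = Matrix.diagonal (fun i => T (d i : ℤ)) * Q.map ψ := by
      rw [hkey, hMap']
    have hE2 : LaurentPolynomial.T (R := K) (N₀ : ℤ) • (M : Matrix (Fin r) (Fin r) (LaurentPolynomial K))
        = ((𝔸⁻¹ : GL (Fin r) (LaurentPolynomial K)) : Matrix (Fin r) (Fin r) (LaurentPolynomial K))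
          * (Matrix.diagonal (fun i => T (d i : ℤ)) * Q.map ψ) := by
      rw [← hE1, ← Matrix.mul_assoc]
      rw [show ((𝔸⁻¹ : GL (Fin r) (LaurentPolynomial K)) : Matrix (Fin r) (Fin r) (LaurentPolynomial K))
        * (𝔸 : Matrix (Fin r) (Fin r) (LaurentPolynomial K)) = 1 from 𝔸.inv_mul, Matrix.one_mul]
    have hdiag : Matrix.diagonal (fun i => LaurentPolynomial.T (R := K) ((d i : ℤ) - N₀))
        = LaurentPolynomial.T (R := K) (-(N₀ : ℤ))
          • Matrix.diagonal (fun i => LaurentPolynomial.T (R := K) (d i : ℤ)) := by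
      refine Matrix.ext fun i j => ?_
      rw [Matrix.smul_apply]
      by_cases hij : i = j
      · subst hij
        rw [Matrix.diagonal_apply_eq, Matrix.diagonal_apply_eq, smul_eq_mul,
          LaurentPolynomial.T_sub, mul_comm]
      · rw [Matrix.diagonal_apply_ne _ hij, Matrix.diagonal_apply_ne _ hij, smul_zero]
    have hM : (M : Matrix (Fin r) (Fin r) (LaurentPolynomial K))
        = LaurentPolynomial.T (R := K) (-(N₀ : ℤ))
          • (LaurentPolynomial.T (R := K) (N₀ : ℤ) • (M : Matrix (Fin r) (Fin r) (LaurentPolynomial K))) := by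
      rw [smul_smul, ← LaurentPolynomial.T_add]
      norm_num
    calc (M : Matrix (Fin r) (Fin r) (LaurentPolynomial K))
        = LaurentPolynomial.T (R := K) (-(N₀ : ℤ))
          • (LaurentPolynomial.T (R := K) (N₀ : ℤ)
            • (M : Matrix (Fin r) (Fin r) (LaurentPolynomial K))) := hM
      _ = LaurentPolynomial.T (R := K) (-(N₀ : ℤ))
          • (((𝔸⁻¹ : GL (Fin r) (LaurentPolynomial K)) : Matrix (Fin r) (Fin r) (LaurentPolynomial K))
            * (Matrix.diagonal (fun i => LaurentPolynomial.T (R := K) (d i : ℤ)) * Q.map ψ)) := by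
          rw [hE2]
      _ = ((𝔸⁻¹ : GL (Fin r) (LaurentPolynomial K)) : Matrix (Fin r) (Fin r) (LaurentPolynomial K))
          * ((LaurentPolynomial.T (R := K) (-(N₀ : ℤ))
            • Matrix.diagonal (fun i => LaurentPolynomial.T (R := K) (d i : ℤ))) * Q.map ψ) := by
          rw [← Matrix.mul_smul, Matrix.smul_mul]
      _ = ((𝔸⁻¹ : GL (Fin r) (LaurentPolynomial K)) : Matrix (Fin r) (Fin r) (LaurentPolynomial K))
          * Matrix.diagonal (fun i => LaurentPolynomial.T (R := K) ((d i : ℤ) - N₀)) * Q.map ψ := by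
          rw [hdiag, Matrix.mul_assoc]
end

section
/- Let Φ be a reduced crystallographic root system with base Δ indexed by D, and let I ⊆ D be a subset meeting every connected component of the Dynkin diagram of Φ. With b_t, c_t defined by Σ_{β∈Φ⁺} β = Σ b_t α_t and Σ_{β∈Φ⁺(I)} β = Σ c_t α_t, one has b_j − c_j > 0 for every j ∈ D \ I. -/
open scoped RealInnerProductSpace Classical
open Finset

/-- A finite reduced crystallographic root system in a real inner product space. -/
structure IsRootSystem {V : Type*} [NormedAddCommGroup V] [InnerProductSpace ℝ V]
    (Φ : Finset V) : Prop where
  zero_not_mem : (0 : V) ∉ Φ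
  span_eq_top : Submodule.span ℝ (Φ : Set V) = ⊤
  reflect_mem : ∀ α ∈ Φ, ∀ β ∈ Φ, β - (2 * ⟪β, α⟫ / ⟪α, α⟫) • α ∈ Φ
  crystallographic : ∀ α ∈ Φ, ∀ β ∈ Φ, ∃ n : ℤ, (n : ℝ) = 2 * ⟪β, α⟫ / ⟪α, α⟫
  reduced : ∀ α ∈ Φ, ∀ t : ℝ, t • α ∈ Φ → t = 1 ∨ t = -1

/-- A base (set of simple roots) of a root system, indexed by `ι`: the simple roots are
linearly independent roots such that every root is a nonnegative or nonpositive integral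
combination of them. -/
structure IsBase {V : Type*} [NormedAddCommGroup V] [InnerProductSpace ℝ V] {ι : Type*}
    [Fintype ι] (Φ : Finset V) (α : ι → V) : Prop where
  mem : ∀ i, α i ∈ Φ
  indep : LinearIndependent ℝ α
  decomp : ∀ β ∈ Φ, (∃ c : ι → ℕ, β = ∑ i, (c i : ℝ) • α i) ∨
      (∃ c : ι → ℕ, β = -∑ i, (c i : ℝ) • α i)

/-- The set of positive roots with respect to a base. -/
noncomputable def posRoots {V : Type*} [NormedAddCommGroup V] [InnerProductSpace ℝ V]
    {ι : Type*} [Fintype ι] (Φ : Finset V) (α : ι → V) : Finset V :=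
  Φ.filter fun β => ∃ c : ι → ℕ, β = ∑ i, (c i : ℝ) • α i

/-- `Φ⁺(I)`: the positive roots supported on the simple roots indexed by the complement
of `I`, i.e. whose coefficient at `α i` vanishes for every `i ∈ I`. -/
noncomputable def posRootsOn {V : Type*} [NormedAddCommGroup V] [InnerProductSpace ℝ V]
    {ι : Type*} [Fintype ι] (Φ : Finset V) (α : ι → V) (I : Finset ι) : Finset V :=
  Φ.filter fun β => ∃ c : ι → ℕ, (∀ i ∈ I, c i = 0) ∧ β = ∑ i, (c i : ℝ) • α i

section Aux
variable {V : Type*} [NormedAddCommGroup V] [InnerProductSpace ℝ V]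
  {ι : Type*} [Fintype ι] {Φ : Finset V} {α : ι → V}

lemma span_range_top (hΦ : IsRootSystem Φ) (hα : IsBase Φ α) :
    ⊤ ≤ Submodule.span ℝ (Set.range α) := by
  rw [← hΦ.span_eq_top, Submodule.span_le]
  intro β hβ
  rcases hα.decomp β hβ with ⟨c, rfl⟩ | ⟨c, rfl⟩
  · exact Submodule.sum_mem _ fun i _ =>
      Submodule.smul_mem _ _ (Submodule.subset_span ⟨i, rfl⟩)
  · exact Submodule.neg_mem _ (Submodule.sum_mem _ fun i _ =>
      Submodule.smul_mem _ _ (Submodule.subset_span ⟨i, rfl⟩))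

noncomputable def baseBasis (hΦ : IsRootSystem Φ) (hα : IsBase Φ α) : Module.Basis ι ℝ V :=
  Module.Basis.mk hα.indep (span_range_top hΦ hα)

lemma repr_sum (hΦ : IsRootSystem Φ) (hα : IsBase Φ α) (c : ι → ℝ) (j : ι) :
    (baseBasis hΦ hα).repr (∑ i, c i • α i) j = c j := by
  have h : ∀ i, α i = (baseBasis hΦ hα) i := fun i => by simp [baseBasis]
  simp_rw [h]
  simp [Finsupp.single_apply]

end Aux

section Aux2
variable {V : Type*} [NormedAddCommGroup V] [InnerProductSpace ℝ V]
  {ι : Type*} [Fintype ι] {Φ : Finset V} {α : ι → V}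

lemma root_ne_zero (hΦ : IsRootSystem Φ) {β : V} (hβ : β ∈ Φ) : β ≠ 0 :=
  fun h => hΦ.zero_not_mem (h ▸ hβ)

lemma inner_self_pos' {x : V} (hx : x ≠ 0) : (0:ℝ) < ⟪x, x⟫ := by
  rw [real_inner_self_eq_norm_sq]
  exact pow_pos (norm_pos_iff.mpr hx) 2

lemma simple_obtuse (hΦ : IsRootSystem Φ) (hα : IsBase Φ α) {s t : ι} (hst : s ≠ t) :
    ⟪α s, α t⟫ ≤ 0 := by
  by_contra h
  push_neg at h
  obtain ⟨n, hn⟩ := hΦ.crystallographic (α t) (hα.mem t) (α s) (hα.mem s)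
  have htt : (0:ℝ) < ⟪α t, α t⟫ := inner_self_pos' (root_ne_zero hΦ (hα.mem t))
  have hnpos : (0:ℝ) < (n:ℝ) := by rw [hn]; positivity
  have hn1 : (1:ℝ) ≤ (n:ℝ) := by exact_mod_cast (by exact_mod_cast hnpos : (0:ℤ) < n)
  have hγ : α s - (n:ℝ) • α t ∈ Φ := by
    have := hΦ.reflect_mem (α t) (hα.mem t) (α s) (hα.mem s)
    rwa [← hn] at this
  set B := baseBasis hΦ hα with hB
  have hcoord : ∀ (d : ι → ℝ) (j : ι), B.repr (∑ i, d i • α i) j = d j := repr_sum hΦ hα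
  have hrepr : ∀ j, B.repr (α s - (n:ℝ) • α t) j =
      (if s = j then 1 else 0) - n * (if t = j then 1 else 0) := by
    intro j
    have hs : α s = B s := by simp [hB, baseBasis]
    have ht : α t = B t := by simp [hB, baseBasis]
    rw [map_sub, map_smul, hs, ht]
    simp [Finsupp.single_apply]
  rcases hα.decomp _ hγ with ⟨d, hd⟩ | ⟨d, hd⟩
  · have h1 : B.repr (α s - (n:ℝ) • α t) t = d t := by rw [hd, hcoord]
    rw [hrepr t, if_neg hst, if_pos rfl] at h1
    have : (0:ℝ) ≤ d t := by positivity
    nlinarith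
  · have h1 : B.repr (α s - (n:ℝ) • α t) s = -(d s) := by
      rw [hd]
      have : -∑ i, ((d i : ℝ)) • α i = ∑ i, (-(d i : ℝ)) • α i := by
        rw [← Finset.sum_neg_distrib]; simp [neg_smul]
      rw [this, hcoord]
    rw [hrepr s, if_pos rfl, if_neg (by exact fun h' => hst h'.symm)] at h1
    have : (0:ℝ) ≤ d s := by positivity
    nlinarith

lemma add_mem_of_inner_neg (hΦ : IsRootSystem Φ) {β γ : V} (hβ : β ∈ Φ) (hγ : γ ∈ Φ)
    (hneg : ⟪β, γ⟫ < 0) (hne : β + γ ≠ 0) : β + γ ∈ Φ := by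
  obtain ⟨m, hm⟩ := hΦ.crystallographic γ hγ β hβ
  obtain ⟨n, hn⟩ := hΦ.crystallographic β hβ γ hγ
  have hββ : (0:ℝ) < ⟪β, β⟫ := inner_self_pos' (root_ne_zero hΦ hβ)
  have hγγ : (0:ℝ) < ⟪γ, γ⟫ := inner_self_pos' (root_ne_zero hΦ hγ)
  have hmneg : (m:ℝ) < 0 := by rw [hm]; apply div_neg_of_neg_of_pos; linarith; exact hγγ
  have hnneg : (n:ℝ) < 0 := by
    rw [hn, real_inner_comm]; apply div_neg_of_neg_of_pos; linarith; exact hββ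
  by_cases hm1 : m = -1
  · have := hΦ.reflect_mem γ hγ β hβ
    rw [← hm, hm1] at this
    simpa [sub_eq_add_neg] using this
  by_cases hn1 : n = -1
  · have := hΦ.reflect_mem β hβ γ hγ
    rw [← hn, hn1] at this
    simpa [add_comm, sub_eq_add_neg] using this
  -- both ≤ -2 : contradiction with Cauchy-Schwarz
  exfalso
  have hmz : m < 0 := by exact_mod_cast hmneg
  have hnz : n < 0 := by exact_mod_cast hnneg
  have hm2 : (m:ℝ) ≤ -2 := by exact_mod_cast (by omega : m ≤ -2)
  have hn2 : (n:ℝ) ≤ -2 := by exact_mod_cast (by omega : n ≤ -2)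
  have hmn : (m:ℝ) * (n:ℝ) = 4 * ⟪β, γ⟫ ^ 2 / (⟪β, β⟫ * ⟪γ, γ⟫) := by
    rw [hm, hn, real_inner_comm γ β]
    field_simp
    ring
  have h4 : (4:ℝ) ≤ (m:ℝ) * (n:ℝ) := by nlinarith
  have hcs : ⟪β, β⟫ * ⟪γ, γ⟫ ≤ ⟪β, γ⟫ ^ 2 := by
    rw [hmn] at h4
    have hpos : (0:ℝ) < ⟪β, β⟫ * ⟪γ, γ⟫ := mul_pos hββ hγγ
    rw [le_div_iff₀ hpos] at h4
    linarith
  have hnorm : ‖β‖ * ‖γ‖ ≤ -⟪β, γ⟫ := by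
    have h1 : ⟪β, β⟫ = ‖β‖ ^ 2 := real_inner_self_eq_norm_sq β
    have h2 : ⟪γ, γ⟫ = ‖γ‖ ^ 2 := real_inner_self_eq_norm_sq γ
    rw [h1, h2] at hcs
    nlinarith [norm_nonneg β, norm_nonneg γ, hneg]
  have heq : ⟪-β, γ⟫ = ‖-β‖ * ‖γ‖ := by
    rw [inner_neg_left, norm_neg]
    have := real_inner_le_norm (-β) γ
    rw [inner_neg_left, norm_neg] at this
    linarith
  have hpar : ‖γ‖ • (-β) = ‖-β‖ • γ := inner_eq_norm_mul_iff_real.mp heq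
  have hβn : ‖β‖ ≠ 0 := norm_ne_zero_iff.mpr (root_ne_zero hΦ hβ)
  have hγeq : (-(‖γ‖ / ‖β‖)) • β = γ := by
    rw [norm_neg] at hpar
    apply smul_right_injective V hβn
    show ‖β‖ • (-(‖γ‖ / ‖β‖) • β) = ‖β‖ • γ
    rw [smul_smul]
    have h5 : ‖β‖ * -(‖γ‖ / ‖β‖) = -‖γ‖ := by field_simp
    rw [h5, neg_smul, ← smul_neg, hpar]
  rcases hΦ.reduced β hβ _ (hγeq ▸ hγ) with h1 | h1
  · have : (0:ℝ) < ‖γ‖ / ‖β‖ := by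
      apply div_pos (norm_pos_iff.mpr (root_ne_zero hΦ hγ))
        (norm_pos_iff.mpr (root_ne_zero hΦ hβ))
    linarith [h1 ▸ (neg_lt_zero.mpr this)]
  · apply hne
    rw [← hγeq, h1, neg_one_smul]
    abel

lemma indicatorSumAux (T : Finset ι) : ∑ i, (if i ∈ T then (1:ℝ) else 0) • α i = ∑ t ∈ T, α t := by
  simp [ite_smul, Finset.sum_ite_mem]

lemma repr_sum_subset (hΦ : IsRootSystem Φ) (hα : IsBase Φ α) (T : Finset ι) (j : ι) :
    (baseBasis hΦ hα).repr (∑ t ∈ T, α t) j = if j ∈ T then 1 else 0 := by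
  rw [← indicatorSumAux T, repr_sum]

lemma exists_root_sum (hΦ : IsRootSystem Φ) (hα : IsBase Φ α) {j i : ι}
    (h : Relation.ReflTransGen (fun s t => s ≠ t ∧ ⟪α s, α t⟫ ≠ 0) j i) :
    ∃ S : Finset ι, j ∈ S ∧ i ∈ S ∧ (∑ t ∈ S, α t) ∈ Φ := by
  induction h with
  | refl =>
    exact ⟨{j}, Finset.mem_singleton_self j, Finset.mem_singleton_self j,
      by simpa using hα.mem j⟩
  | @tail b c hjb hbc ih =>
    obtain ⟨S, hjS, hbS, hSroot⟩ := ih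
    by_cases hcS : c ∈ S
    · exact ⟨S, hjS, hcS, hSroot⟩
    · refine ⟨insert c S, Finset.mem_insert_of_mem hjS, Finset.mem_insert_self _ _, ?_⟩
      have hinner : ⟪∑ t ∈ S, α t, α c⟫ < 0 := by
        rw [sum_inner]
        have h1 : ∑ t ∈ S, ⟪α t, α c⟫ < ∑ t ∈ S, (0:ℝ) :=
          Finset.sum_lt_sum
            (fun t ht => simple_obtuse hΦ hα (fun h' => hcS (h' ▸ ht)))
            ⟨b, hbS, lt_of_le_of_ne (simple_obtuse hΦ hα hbc.1) hbc.2⟩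
        simpa using h1
      have hne : (∑ t ∈ S, α t) + α c ≠ 0 := by
        intro h0
        have h1 : ∑ t ∈ insert c S, α t = 0 := by
          rw [Finset.sum_insert hcS, add_comm]; exact h0
        have h2 := repr_sum_subset hΦ hα (insert c S) c
        rw [h1, if_pos (Finset.mem_insert_self c S)] at h2
        simp at h2
      have := add_mem_of_inner_neg hΦ hSroot (hα.mem c) hinner hne
      rw [Finset.sum_insert hcS, add_comm]
      exact this

end Aux2

theorem coeffs_strict_of_meets_components' {V : Type*} [NormedAddCommGroup V]
    [InnerProductSpace ℝ V] {ι : Type*} [Fintype ι] (Φ : Finset V) (α : ι → V)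
    (hΦ : IsRootSystem Φ) (hα : IsBase Φ α) (I : Finset ι)
    (hI : ∀ j : ι, ∃ i ∈ I, Relation.ReflTransGen (fun s t => s ≠ t ∧ ⟪α s, α t⟫ ≠ 0) j i)
    (b c : ι → ℝ)
    (hb : ∑ β ∈ (Φ.filter fun β => ∃ c : ι → ℕ, β = ∑ i, (c i : ℝ) • α i), β = ∑ t, b t • α t)
    (hc : ∑ β ∈ (Φ.filter fun β => ∃ c : ι → ℕ, (∀ i ∈ I, c i = 0) ∧ β = ∑ i, (c i : ℝ) • α i), β = ∑ t, c t • α t) :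
    ∀ j ∉ I, 0 < b j - c j := by
  intro j hjI
  set B := baseBasis hΦ hα with hB
  set P := Φ.filter fun β => ∃ c : ι → ℕ, β = ∑ i, (c i : ℝ) • α i with hP
  set Q := Φ.filter fun β => ∃ c : ι → ℕ, (∀ i ∈ I, c i = 0) ∧ β = ∑ i, (c i : ℝ) • α i with hQ
  have hbj : b j = ∑ β ∈ P, B.repr β j := by
    have h1 : B.repr (∑ β ∈ P, β) j = b j := by rw [hb]; exact repr_sum hΦ hα b j
    rw [← h1, map_sum]
    exact Finset.sum_apply' j
  have hcj : c j = ∑ β ∈ Q, B.repr β j := by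
    have h1 : B.repr (∑ β ∈ Q, β) j = c j := by rw [hc]; exact repr_sum hΦ hα c j
    rw [← h1, map_sum]
    exact Finset.sum_apply' j
  have hsub : Q ⊆ P := by
    intro β hβ
    rw [hQ, Finset.mem_filter] at hβ
    rw [hP, Finset.mem_filter]
    exact ⟨hβ.1, hβ.2.elim fun d hd => ⟨d, hd.2⟩⟩
  have hdiff : b j - c j = ∑ β ∈ P \ Q, B.repr β j := by
    rw [hbj, hcj, Finset.sum_sdiff_eq_sub hsub]
  rw [hdiff]
  apply Finset.sum_pos'
  · intro β hβ
    have hβP : β ∈ P := (Finset.mem_sdiff.mp hβ).1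
    rw [hP, Finset.mem_filter] at hβP
    obtain ⟨_, d, hd⟩ := hβP
    rw [hd, repr_sum]
    positivity
  · obtain ⟨i, hiI, hpath⟩ := hI j
    obtain ⟨S, hjS, hiS, hroot⟩ := exists_root_sum hΦ hα hpath
    refine ⟨∑ t ∈ S, α t, ?_, ?_⟩
    · rw [Finset.mem_sdiff]
      constructor
      · rw [hP, Finset.mem_filter]
        refine ⟨hroot, fun t => if t ∈ S then 1 else 0, ?_⟩
        rw [← indicatorSumAux S]
        refine Finset.sum_congr rfl fun t _ => ?_
        by_cases h : t ∈ S <;> simp [h]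
      · intro hmem
        rw [hQ, Finset.mem_filter] at hmem
        obtain ⟨_, d, hd0, hdsum⟩ := hmem
        have h1 : B.repr (∑ t ∈ S, α t) i = d i := by rw [hdsum, repr_sum]
        rw [repr_sum_subset hΦ hα S i, if_pos hiS, hd0 i hiI] at h1
        norm_num at h1
    · rw [repr_sum_subset hΦ hα S j, if_pos hjS]
      norm_num

/-- If `I ⊆ D` meets every connected component of the Dynkin diagram (whose edges join
`s ≠ t` with `⟪α s, α t⟫ ≠ 0`), then `b j - c j > 0` for every `j ∉ I`, where
`∑_{β∈Φ⁺} β = ∑ b t • α t` and `∑_{β∈Φ⁺(I)} β = ∑ c t • α t`. -/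
theorem coeffs_strict_of_meets_components {V : Type*} [NormedAddCommGroup V]
    [InnerProductSpace ℝ V] {ι : Type*} [Fintype ι] (Φ : Finset V) (α : ι → V)
    (hΦ : IsRootSystem Φ) (hα : IsBase Φ α) (I : Finset ι)
    (hI : ∀ j : ι, ∃ i ∈ I, Relation.ReflTransGen (fun s t => s ≠ t ∧ ⟪α s, α t⟫ ≠ 0) j i)
    (b c : ι → ℝ)
    (hb : ∑ β ∈ posRoots Φ α, β = ∑ t, b t • α t)
    (hc : ∑ β ∈ posRootsOn Φ α I, β = ∑ t, c t • α t) :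
    ∀ j ∉ I, 0 < b j - c j := by
  exact coeffs_strict_of_meets_components' Φ α hΦ hα I hI b c hb hc
end
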